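/- Let z ∈ ℂ with 0 < Re z < 1, let θ ∈ {π/4, -3π/4}, and let r_m be a real number with 0 < r_m. Then the function r₁ ↦ r₁^(1 - Re z) · ‖∫_{r₁}^{r_m} f_r(t·exp(iθ))·exp(iθ) dt‖ tends to exp(-θ·Im z)/(2π·‖z - 1‖) as r₁ → 0⁺ (limit within (0, r_m)); in particular this limit is positive, so the straight-line integral diverges like r₁^(Re z - 1) as r₁ → 0. -/

import Mathlib

open Filter

/-- The right integrand `f_r(w) = w^(z-1)·exp(πi w²)/(exp(πi w) - exp(-πi w))`. -/
noncomputable def fr (z w : ℂ) : ℂ :=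
  w ^ (z - 1) * Complex.exp (Real.pi * Complex.I * w ^ 2) /
    (Complex.exp (Real.pi * Complex.I * w) - Complex.exp (-(Real.pi * Complex.I) * w))

noncomputable def psiF (w : ℂ) : ℂ :=
  Complex.exp (Real.pi * Complex.I * w) - Complex.exp (-(Real.pi * Complex.I) * w)

noncomputable def etaF (w : ℂ) : ℂ :=
  2 * Real.pi * Complex.I * Complex.exp (Real.pi * Complex.I * w ^ 2) - dslope psiF 0 w

noncomputable def HF (w : ℂ) : ℂ :=
  dslope etaF 0 w / (2 * Real.pi * Complex.I * dslope psiF 0 w)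

lemma analyticAt_dslope {f : ℂ → ℂ} {z₀ : ℂ} (h : AnalyticAt ℂ f z₀) :
    AnalyticAt ℂ (dslope f z₀) z₀ := by
  obtain ⟨p, hp⟩ := h
  exact ⟨p.fslope, hp.has_fpower_series_dslope_fslope⟩

lemma psiF_zero : psiF 0 = 0 := by simp [psiF]

lemma differentiable_psiF : Differentiable ℂ psiF := by
  unfold psiF
  exact ((differentiable_const _).mul differentiable_id).cexp.sub
    ((differentiable_const _).mul differentiable_id).cexp

lemma hasDerivAt_psiF_zero : HasDerivAt psiF (2 * Real.pi * Complex.I) 0 := by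
  have ha : HasDerivAt (fun w : ℂ => Real.pi * Complex.I * w) (Real.pi * Complex.I) 0 := by
    simpa using (hasDerivAt_id (0:ℂ)).const_mul (Real.pi * Complex.I)
  have hb : HasDerivAt (fun w : ℂ => -(Real.pi * Complex.I) * w) (-(Real.pi * Complex.I)) 0 := by
    simpa using (hasDerivAt_id (0:ℂ)).const_mul (-(Real.pi * Complex.I))
  have h := (ha.cexp).sub (hb.cexp)
  simp only [mul_zero, Complex.exp_zero, one_mul] at h
  unfold psiF
  rw [show (2 * Real.pi * Complex.I : ℂ) = Real.pi * Complex.I - -(Real.pi * Complex.I) by ring]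
  exact h

lemma deriv_psiF_zero : deriv psiF 0 = 2 * Real.pi * Complex.I :=
  hasDerivAt_psiF_zero.deriv

lemma dslope_psiF_zero : dslope psiF 0 0 = 2 * Real.pi * Complex.I := by
  rw [dslope_same, deriv_psiF_zero]

lemma etaF_zero : etaF 0 = 0 := by
  simp [etaF, dslope_psiF_zero, deriv_psiF_zero]

lemma dslope_psiF_of_ne {w : ℂ} (hw : w ≠ 0) : dslope psiF 0 w = psiF w / w := by
  rw [dslope_of_ne _ hw, slope_def_field, psiF_zero, sub_zero, sub_zero]

lemma dslope_etaF_of_ne {w : ℂ} (hw : w ≠ 0) : dslope etaF 0 w = etaF w / w := by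
  rw [dslope_of_ne _ hw, slope_def_field, etaF_zero, sub_zero, sub_zero]

lemma two_pi_I_ne : (2 * Real.pi * Complex.I : ℂ) ≠ 0 := by
  simp [Real.pi_ne_zero, Complex.I_ne_zero]

/-- Key algebraic identity away from the singularity. -/
lemma exp_div_psiF {w : ℂ} (hw : w ≠ 0) (hpsi : psiF w ≠ 0) :
    Complex.exp (Real.pi * Complex.I * w ^ 2) / psiF w
      = 1 / (2 * Real.pi * Complex.I * w) + HF w := by
  rw [HF, dslope_etaF_of_ne hw, dslope_psiF_of_ne hw, etaF, dslope_psiF_of_ne hw]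
  have h2 := two_pi_I_ne
  field_simp
  ring

lemma analyticAt_HF_num : AnalyticAt ℂ (dslope etaF 0) 0 := by
  apply analyticAt_dslope
  have h1 : AnalyticAt ℂ (fun w : ℂ =>
      2 * Real.pi * Complex.I * Complex.exp (Real.pi * Complex.I * w ^ 2)) 0 := by
    rw [Complex.analyticAt_iff_eventually_differentiableAt]
    filter_upwards with y
    fun_prop
  have h2 : AnalyticAt ℂ (dslope psiF 0) 0 := by
    apply analyticAt_dslope
    rw [Complex.analyticAt_iff_eventually_differentiableAt]
    filter_upwards with y
    exact differentiable_psiF y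
  exact h1.sub h2

lemma continuousAt_HF_zero : ContinuousAt HF 0 := by
  apply ContinuousAt.div
  · exact analyticAt_HF_num.continuousAt
  · apply ContinuousAt.mul continuousAt_const
    exact (analyticAt_dslope (by
      rw [Complex.analyticAt_iff_eventually_differentiableAt]
      filter_upwards with y
      exact differentiable_psiF y)).continuousAt
  · rw [dslope_psiF_zero]
    exact mul_ne_zero two_pi_I_ne two_pi_I_ne

lemma continuousAt_HF_of_ne {w : ℂ} (hw : w ≠ 0) (hpsi : psiF w ≠ 0) :
    ContinuousAt HF w := by
  have hcψ : Continuous psiF := by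
    unfold psiF
    exact ((continuous_const.mul continuous_id).cexp).sub
      ((continuous_const.mul continuous_id).cexp)
  have hφ : ContinuousAt (dslope psiF 0) w :=
    (continuousAt_dslope_of_ne hw).mpr hcψ.continuousAt
  have hη : ContinuousAt etaF w := by
    apply ContinuousAt.sub _ hφ
    exact (continuous_const.mul ((continuous_const.mul (continuous_pow 2)).cexp)).continuousAt
  apply ContinuousAt.div
  · exact (continuousAt_dslope_of_ne hw).mpr hη
  · exact continuousAt_const.mul hφ
  · rw [dslope_psiF_of_ne hw]
    exact mul_ne_zero two_pi_I_ne (div_ne_zero hpsi hw)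
theorem fr_segment_singularity (z : ℂ) (h0 : 0 < z.re) (h1 : z.re < 1)
    (θ : ℝ) (hθ : θ = Real.pi / 4 ∨ θ = -(3 * Real.pi / 4))
    (rm : ℝ) (hrm : 0 < rm) :
    Tendsto (fun r₁ : ℝ => r₁ ^ (1 - z.re) *
        ‖∫ t in r₁..rm, fr z (t * Complex.exp (θ * Complex.I)) *
            Complex.exp (θ * Complex.I)‖)
      (nhdsWithin 0 (Set.Ioo 0 rm))
      (nhds (Real.exp (-(θ * z.im)) / (2 * Real.pi * ‖z - 1‖))) ∧
    0 < Real.exp (-(θ * z.im)) / (2 * Real.pi * ‖z - 1‖) := by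
  have hpi := Real.pi_pos
  have hθ1 : -Real.pi < θ := by rcases hθ with h | h <;> rw [h] <;> linarith
  have hθ2 : θ ≤ Real.pi := by rcases hθ with h | h <;> rw [h] <;> linarith
  have hsin : Real.sin θ ≠ 0 := by
    rcases hθ with h | h
    · rw [h, Real.sin_pi_div_four]
      positivity
    · rw [h, Real.sin_neg]
      have : (3 : ℝ) * Real.pi / 4 = Real.pi - Real.pi / 4 := by ring
      rw [this, Real.sin_pi_sub, Real.sin_pi_div_four]
      exact neg_ne_zero.mpr (by positivity)
  set c : ℂ := Complex.exp (θ * Complex.I) with hc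
  have hc0 : c ≠ 0 := Complex.exp_ne_zero _
  have hz1 : z ≠ 1 := by
    intro h
    rw [h] at h1
    simp at h1
  have hz1' : z - 1 ≠ 0 := sub_ne_zero.mpr hz1
  have hz2 : z - 2 ≠ -1 := fun h => hz1 (by linear_combination h)
  -- imaginary part of t·c
  have him : ∀ t : ℝ, ((t : ℂ) * c).im = t * Real.sin θ := by
    intro t
    rw [hc, Complex.mul_im]
    simp [Complex.exp_ofReal_mul_I_im]
  have hwne : ∀ t : ℝ, 0 < t → ((t : ℂ) * c) ≠ 0 := by
    intro t ht h
    have h2 : t * Real.sin θ = 0 := by rw [← him t, h]; simp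
    rcases mul_eq_zero.mp h2 with h3 | h3
    · exact ht.ne' h3
    · exact hsin h3
  have hpsine : ∀ t : ℝ, 0 < t → psiF ((t : ℂ) * c) ≠ 0 := by
    intro t ht h
    rw [psiF, sub_eq_zero, Complex.exp_eq_exp_iff_exists_int] at h
    obtain ⟨n, hn⟩ := h
    have hw : (t : ℂ) * c = (n : ℂ) := by
      have h2 : 2 * Real.pi * Complex.I * ((t : ℂ) * c)
          = 2 * Real.pi * Complex.I * (n : ℂ) := by linear_combination hn
      exact mul_left_cancel₀ two_pi_I_ne h2
    have h3 : ((t : ℂ) * c).im = 0 := by rw [hw]; simp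
    rw [him t] at h3
    rcases mul_eq_zero.mp h3 with h4 | h4
    · exact ht.ne' h4
    · exact hsin h4
  -- cpow formulas
  have hcpow : ∀ t : ℝ, 0 < t → ∀ s : ℂ,
      ((t : ℂ) * c) ^ s = Complex.exp (((Real.log t : ℂ) + θ * Complex.I) * s) := by
    intro t ht s
    have he : (t : ℂ) * c = Complex.exp ((Real.log t : ℂ) + θ * Complex.I) := by
      rw [Complex.exp_add, ← Complex.ofReal_exp, Real.exp_log ht, hc]
    rw [he, Complex.cpow_def_of_ne_zero (Complex.exp_ne_zero _), Complex.log_exp]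
    · simpa using hθ1
    · simpa using hθ2
  have hrcpow : ∀ t : ℝ, 0 < t → ∀ s : ℂ,
      ((t : ℝ) : ℂ) ^ s = Complex.exp ((Real.log t : ℂ) * s) := by
    intro t ht s
    have ht0 : ((t : ℝ) : ℂ) ≠ 0 := by exact_mod_cast ht.ne'
    rw [Complex.cpow_def_of_ne_zero ht0, ← Complex.ofReal_log ht.le]
  -- the constant A and remainder Rem
  set E : ℂ := Complex.exp ((θ * Complex.I) * (z - 1)) with hE
  set A : ℂ := E / (2 * Real.pi * Complex.I) with hA
  set Rem : ℝ → ℂ := fun t => ((t : ℂ) ^ (z - 1)) * E * c * HF ((t : ℂ) * c) with hRem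
  -- pointwise decomposition
  have hsplitpow : ∀ t : ℝ, 0 < t →
      ((t : ℂ) * c) ^ (z - 1) = (t : ℂ) ^ (z - 1) * E := by
    intro t ht
    rw [hcpow t ht, hrcpow t ht, hE, ← Complex.exp_add]
    congr 1
    ring
  have ht21 : ∀ t : ℝ, 0 < t → ((t : ℂ)) ^ (z - 1) = (t : ℂ) ^ (z - 2) * t := by
    intro t ht
    rw [hrcpow t ht (z - 1), hrcpow t ht (z - 2)]
    have h5 : (Real.log t : ℂ) * (z - 1) = (Real.log t) * (z - 2) + Real.log t := by ring
    rw [h5, Complex.exp_add, ← Complex.ofReal_exp, Real.exp_log ht]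
  have hdecomp : ∀ t : ℝ, 0 < t →
      fr z ((t : ℂ) * c) * c = A * (t : ℂ) ^ (z - 2) + Rem t := by
    intro t ht
    have hw := hwne t ht
    have hψ := hpsine t ht
    have ht0 : ((t : ℝ) : ℂ) ≠ 0 := by exact_mod_cast ht.ne'
    have hfr : fr z ((t : ℂ) * c) = ((t : ℂ) * c) ^ (z - 1) *
        (Complex.exp (Real.pi * Complex.I * ((t : ℂ) * c) ^ 2) / psiF ((t : ℂ) * c)) := by
      simp only [fr, psiF, mul_div_assoc]
    rw [hfr, exp_div_psiF hw hψ, hsplitpow t ht]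
    simp only [hRem, hA]
    rw [ht21 t ht]
    field_simp [ht0, hc0, two_pi_I_ne]
  -- continuity of Rem on (0, ∞)
  have hcmul : Continuous fun t : ℝ => (t : ℂ) * c :=
    Complex.continuous_ofReal.mul continuous_const
  have hHFcont : ∀ t : ℝ, 0 < t → ContinuousAt (fun t : ℝ => HF ((t : ℂ) * c)) t := by
    intro t ht
    exact ContinuousAt.comp (f := fun t : ℝ => (t : ℂ) * c) (x := t)
      (continuousAt_HF_of_ne (hwne t ht) (hpsine t ht)) hcmul.continuousAt
  have hRemCont : ContinuousOn Rem (Set.Ioi 0) := by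
    intro t ht
    apply ContinuousAt.continuousWithinAt
    have h6 : ContinuousAt (fun t : ℝ => ((t : ℂ)) ^ (z - 1)) t := by
      have hsl : ((t : ℝ) : ℂ) ∈ Complex.slitPlane := Or.inl (by simpa using ht)
      exact ContinuousAt.comp (f := fun t : ℝ => ((t : ℝ) : ℂ)) (x := t)
        (continuousAt_cpow_const hsl) Complex.continuous_ofReal.continuousAt
    exact ((h6.mul continuousAt_const).mul continuousAt_const).mul (hHFcont t ht)
  -- bound for HF on the compact segment
  obtain ⟨M₀, hM₀⟩ : ∃ M₀, ∀ t ∈ Set.Icc (0 : ℝ) rm, ‖HF ((t : ℂ) * c)‖ ≤ M₀ := by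
    apply IsCompact.exists_bound_of_continuousOn isCompact_Icc
    intro t ht
    rcases eq_or_lt_of_le ht.1 with h | h
    · subst h
      apply ContinuousAt.continuousWithinAt
      have h0c : ((0 : ℝ) : ℂ) * c = 0 := by simp
      have hz0 := continuousAt_HF_zero
      rw [← h0c] at hz0
      exact ContinuousAt.comp (f := fun t : ℝ => (t : ℂ) * c) (x := (0:ℝ))
        hz0 hcmul.continuousAt
    · exact (hHFcont t h).continuousWithinAt
  set M : ℝ := max M₀ 0 with hM
  have hMn : 0 ≤ M := le_max_right _ _
  have hM' : ∀ t ∈ Set.Icc (0 : ℝ) rm, ‖HF ((t : ℂ) * c)‖ ≤ M :=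
    fun t ht => (hM₀ t ht).trans (le_max_left _ _)
  -- norm facts
  have hnormc : ‖c‖ = 1 := by
    rw [hc, Complex.norm_exp]
    simp
  have hnormr : ∀ t : ℝ, 0 < t → ∀ s : ℂ, ‖((t : ℝ) : ℂ) ^ s‖ = t ^ s.re := by
    intro t ht s
    rw [Complex.norm_cpow_eq_rpow_re_of_pos ht]
  -- bound for Rem
  have hRemBound : ∀ t ∈ Set.Ioc (0 : ℝ) rm, ‖Rem t‖ ≤ (‖E‖ * M) * t ^ (z.re - 1) := by
    intro t ht
    rw [hRem]
    simp only [norm_mul]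
    rw [hnormr t ht.1, hnormc, mul_one]
    have h7 : (z - 1).re = z.re - 1 := by simp
    rw [h7]
    have h8 : ‖HF ((t : ℂ) * c)‖ ≤ M := hM' t ⟨ht.1.le, ht.2⟩
    have h9 : (0 : ℝ) ≤ t ^ (z.re - 1) := Real.rpow_nonneg ht.1.le _
    calc t ^ (z.re - 1) * ‖E‖ * ‖HF ((t : ℂ) * c)‖
        ≤ t ^ (z.re - 1) * ‖E‖ * M := by
          apply mul_le_mul_of_nonneg_left h8 (by positivity)
      _ = (‖E‖ * M) * t ^ (z.re - 1) := by ring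
  -- integrability of Rem on (0, rm]
  have hgInt : MeasureTheory.IntegrableOn (fun t : ℝ => (‖E‖ * M) * t ^ (z.re - 1))
      (Set.Ioc 0 rm) MeasureTheory.volume := by
    have := (intervalIntegral.intervalIntegrable_rpow' (a := 0) (b := rm) (by linarith : (-1 : ℝ) < z.re - 1)).1
    exact this.const_mul _
  have hRemInt : MeasureTheory.IntegrableOn Rem (Set.Ioc 0 rm) MeasureTheory.volume := by
    apply MeasureTheory.Integrable.mono' hgInt
    · exact (hRemCont.mono Set.Ioc_subset_Ioi_self).aestronglyMeasurable measurableSet_Ioc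
    · exact (MeasureTheory.ae_restrict_mem measurableSet_Ioc).mono hRemBound
  set B : ℝ := ∫ t in Set.Ioc (0 : ℝ) rm, ‖Rem t‖ with hB
  have hBnd : ∀ r₁ ∈ Set.Ioo (0 : ℝ) rm, ‖∫ t in r₁..rm, Rem t‖ ≤ B := by
    intro r₁ hr₁
    rw [intervalIntegral.integral_of_le hr₁.2.le]
    refine le_trans (MeasureTheory.norm_integral_le_integral_norm _) ?_
    rw [hB]
    apply MeasureTheory.setIntegral_mono_set hRemInt.norm
    · filter_upwards with x using norm_nonneg _
    · filter_upwards with x hx using ⟨hr₁.1.trans hx.1, hx.2⟩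
  -- interval integrability on [r₁, rm]
  have hRemIntvl : ∀ r₁ ∈ Set.Ioo (0 : ℝ) rm, IntervalIntegrable Rem MeasureTheory.volume r₁ rm := by
    intro r₁ hr₁
    apply ContinuousOn.intervalIntegrable
    apply hRemCont.mono
    rw [Set.uIcc_of_le hr₁.2.le]
    intro x hx
    exact lt_of_lt_of_le hr₁.1 hx.1
  have hCpowIntvl : ∀ r₁ ∈ Set.Ioo (0 : ℝ) rm,
      IntervalIntegrable (fun t : ℝ => ((t : ℂ)) ^ (z - 2)) MeasureTheory.volume r₁ rm := by
    intro r₁ hr₁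
    apply intervalIntegral.intervalIntegrable_cpow
    right
    rw [Set.uIcc_of_le hr₁.2.le]
    intro hx
    exact absurd hx.1 (by linarith [hr₁.1])
  -- integral splitting
  have hsplitInt : ∀ r₁ ∈ Set.Ioo (0 : ℝ) rm,
      (∫ t in r₁..rm, fr z ((t : ℂ) * c) * c)
        = A * (((rm : ℂ) ^ (z - 1) - ((r₁ : ℝ) : ℂ) ^ (z - 1)) / (z - 1))
          + ∫ t in r₁..rm, Rem t := by
    intro r₁ hr₁
    have h1 : (∫ t in r₁..rm, fr z ((t : ℂ) * c) * c)
        = ∫ t in r₁..rm, (A * (t : ℂ) ^ (z - 2) + Rem t) := by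
      apply intervalIntegral.integral_congr
      intro t ht
      rw [Set.uIcc_of_le hr₁.2.le] at ht
      exact hdecomp t (lt_of_lt_of_le hr₁.1 ht.1)
    have hmem : (0 : ℝ) ∉ Set.uIcc r₁ rm := by
      rw [Set.uIcc_of_le hr₁.2.le]
      intro hx
      exact absurd hx.1 (by linarith [hr₁.1])
    rw [h1, intervalIntegral.integral_add ((hCpowIntvl r₁ hr₁).const_mul A) (hRemIntvl r₁ hr₁),
      intervalIntegral.integral_const_mul, integral_cpow (Or.inr ⟨hz2, hmem⟩)]
    have h21 : z - 2 + 1 = z - 1 := by ring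
    rw [h21]
  -- limits
  have T0c : Tendsto (fun r : ℝ => r ^ (1 - z.re)) (nhdsWithin 0 (Set.Ioo 0 rm)) (nhds 0) := by
    have h2 := (Real.continuousAt_rpow_const 0 (1 - z.re) (Or.inr (by linarith))).tendsto
    rw [Real.zero_rpow (by linarith : (1 : ℝ) - z.re ≠ 0)] at h2
    exact h2.mono_left nhdsWithin_le_nhds
  have T0 : Tendsto (fun r : ℝ => ((r : ℝ) : ℂ) ^ (1 - z))
      (nhdsWithin 0 (Set.Ioo 0 rm)) (nhds 0) := by
    rw [tendsto_zero_iff_norm_tendsto_zero]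
    apply T0c.congr'
    filter_upwards [self_mem_nhdsWithin] with r hr
    rw [hnormr r hr.1]
    norm_num
  have TRem : Tendsto (fun r₁ : ℝ => ((r₁ : ℝ) : ℂ) ^ (1 - z) * ∫ t in r₁..rm, Rem t)
      (nhdsWithin 0 (Set.Ioo 0 rm)) (nhds 0) := by
    have hgt : Tendsto (fun r₁ : ℝ => r₁ ^ (1 - z.re) * B)
        (nhdsWithin 0 (Set.Ioo 0 rm)) (nhds 0) := by
      simpa using T0c.mul_const B
    apply squeeze_zero_norm' _ hgt
    filter_upwards [self_mem_nhdsWithin] with r hr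
    rw [norm_mul, hnormr r hr.1]
    have h10 : ((1 : ℂ) - z).re = 1 - z.re := by simp
    rw [h10]
    exact mul_le_mul_of_nonneg_left (hBnd r hr) (Real.rpow_nonneg hr.1.le _)
  have TG : Tendsto (fun r₁ : ℝ =>
      A * (((rm : ℂ) ^ (z - 1) * ((r₁ : ℝ) : ℂ) ^ (1 - z) - 1) / (z - 1))
        + ((r₁ : ℝ) : ℂ) ^ (1 - z) * ∫ t in r₁..rm, Rem t)
      (nhdsWithin 0 (Set.Ioo 0 rm)) (nhds (-(A / (z - 1)))) := by
    have h11 : Tendsto (fun r₁ : ℝ =>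
        A * (((rm : ℂ) ^ (z - 1) * ((r₁ : ℝ) : ℂ) ^ (1 - z) - 1) / (z - 1)))
        (nhdsWithin 0 (Set.Ioo 0 rm))
        (nhds (A * (((rm : ℂ) ^ (z - 1) * 0 - 1) / (z - 1)))) := by
      exact Tendsto.const_mul A (((T0.const_mul _).sub tendsto_const_nhds).div_const _)
    have h12 : A * (((rm : ℂ) ^ (z - 1) * 0 - 1) / (z - 1)) + 0 = -(A / (z - 1)) := by
      rw [mul_zero, zero_sub, add_zero, neg_div, mul_neg, mul_one_div]
    rw [← h12]
    exact h11.add TRem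
  -- Φ tends to -(A/(z-1))
  have TPhi : Tendsto (fun r₁ : ℝ => ((r₁ : ℝ) : ℂ) ^ (1 - z) *
      ∫ t in r₁..rm, fr z ((t : ℂ) * c) * c)
      (nhdsWithin 0 (Set.Ioo 0 rm)) (nhds (-(A / (z - 1)))) := by
    apply TG.congr'
    filter_upwards [self_mem_nhdsWithin] with r hr
    have hr0 : ((r : ℝ) : ℂ) ≠ 0 := by exact_mod_cast hr.1.ne'
    have hone : ((r : ℝ) : ℂ) ^ (1 - z) * ((r : ℝ) : ℂ) ^ (z - 1) = 1 := by
      rw [← Complex.cpow_add _ _ hr0]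
      norm_num
    rw [hsplitInt r hr]
    linear_combination (A / (z - 1)) * hone
  -- final norm computation
  have hAnorm : ‖-(A / (z - 1))‖ = Real.exp (-(θ * z.im)) / (2 * Real.pi * ‖z - 1‖) := by
    rw [norm_neg, norm_div, hA, norm_div, hE]
    have h13 : ‖Complex.exp (↑θ * Complex.I * (z - 1))‖ = Real.exp (-(θ * z.im)) := by
      rw [Complex.norm_exp]
      congr 1
      simp [Complex.mul_re, Complex.mul_im]
    have h14 : ‖(2 * Real.pi * Complex.I : ℂ)‖ = 2 * Real.pi := by
      simp [abs_of_pos hpi]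
    rw [h13, h14, div_div]
  constructor
  · have Tn := TPhi.norm
    rw [hAnorm] at Tn
    apply Tn.congr'
    filter_upwards [self_mem_nhdsWithin] with r hr
    rw [norm_mul, hnormr r hr.1]
    norm_num
  · apply div_pos (Real.exp_pos _)
    apply mul_pos (by linarith)
    rw [norm_pos_iff]
    exact hz1'
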